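/- Let H_A, H_B, H_C be finite-dimensional Hilbert spaces, α : H_A → H_B ⊗ H_C a linear isometry, and Φ : B(H_A) → B(H_C), Φ(ρ) = (Tr_{H_B} ⊗ id)(α ρ α*) the associated quantum channel. If sup{ |⟨α(ξ), η ⊗ ζ⟩| : ξ, η, ζ unit vectors } ≤ c, then for every density matrix ρ on H_A, the operator norm of Φ(ρ) is at most c², and consequently the minimum output entropy satisfies H_min(Φ) ≥ −2 log c. -/

import Mathlib

open scoped ComplexOrder

open scoped InnerProductSpace

open Matrix

/-- The elementary tensor of two vectors, in the Euclidean model of H_B ⊗ H_C. -/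
noncomputable def tensor {a b : ℕ} (η : EuclideanSpace ℂ (Fin a))
    (ζ : EuclideanSpace ℂ (Fin b)) : EuclideanSpace ℂ (Fin a × Fin b) :=
  WithLp.toLp 2 (fun p : Fin a × Fin b => η p.1 * ζ p.2)

/-- The matrix of a linear isometry α : H_A → H_B ⊗ H_C in the standard bases. -/
noncomputable def isomMat {a b c : ℕ}
    (α : EuclideanSpace ℂ (Fin a) →ₗᵢ[ℂ] EuclideanSpace ℂ (Fin b × Fin c)) :
    Matrix (Fin b × Fin c) (Fin a) ℂ :=
  Matrix.of fun p s => α (EuclideanSpace.single s 1) p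

/-- The quantum channel Φ(ρ) = (Tr_{H_B} ⊗ id)(α ρ α*). -/
noncomputable def chan {a b c : ℕ}
    (α : EuclideanSpace ℂ (Fin a) →ₗᵢ[ℂ] EuclideanSpace ℂ (Fin b × Fin c))
    (ρ : Matrix (Fin a) (Fin a) ℂ) : Matrix (Fin c) (Fin c) ℂ :=
  Matrix.of fun j j' => ∑ i : Fin b,
    (isomMat α * ρ * (isomMat α).conjTranspose) (i, j) (i, j')

open scoped MatrixOrder in
noncomputable def Matrix.PosSemidef.sqrt {n : Type*} [Fintype n] [DecidableEq n]
    {A : Matrix n n ℂ} (_hA : A.PosSemidef) : Matrix n n ℂ := CFC.sqrt A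

open scoped MatrixOrder in
lemma Matrix.PosSemidef.posSemidef_sqrt {n : Type*} [Fintype n] [DecidableEq n]
    {A : Matrix n n ℂ} (hA : A.PosSemidef) : hA.sqrt.PosSemidef :=
  Matrix.nonneg_iff_posSemidef.mp (CFC.sqrt_nonneg A)

open scoped MatrixOrder in
lemma Matrix.PosSemidef.sqrt_mul_self {n : Type*} [Fintype n] [DecidableEq n]
    {A : Matrix n n ℂ} (hA : A.PosSemidef) : hA.sqrt * hA.sqrt = A :=
  CFC.sqrt_mul_sqrt_self A hA.nonneg

lemma mulVec_isomMat {a b c : ℕ}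
    (α : EuclideanSpace ℂ (Fin a) →ₗᵢ[ℂ] EuclideanSpace ℂ (Fin b × Fin c))
    (ξ : EuclideanSpace ℂ (Fin a)) (p : Fin b × Fin c) :
    (isomMat α *ᵥ ξ) p = α ξ p := by
  have hξ : ξ = ∑ s, ξ s • EuclideanSpace.single s (1:ℂ) := by
    ext t
    rw [WithLp.ofLp_sum, Finset.sum_apply t Finset.univ _]
    simp [EuclideanSpace.single_apply]
  conv_rhs => rw [hξ, map_sum]
  rw [WithLp.ofLp_sum, Finset.sum_apply p Finset.univ _]
  simp [Matrix.mulVec, dotProduct, isomMat, mul_comm]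

lemma inner_tensor_single {a b c : ℕ}
    (α : EuclideanSpace ℂ (Fin a) →ₗᵢ[ℂ] EuclideanSpace ℂ (Fin b × Fin c))
    (ξ : EuclideanSpace ℂ (Fin a)) (ζ : EuclideanSpace ℂ (Fin c)) (i : Fin b) :
    ⟪α ξ, tensor (EuclideanSpace.single i 1) ζ⟫_ℂ
      = ∑ j, (starRingEnd ℂ) (α ξ (i, j)) * ζ j := by
  rw [PiLp.inner_apply, Fintype.sum_prod_type]
  simp [tensor, EuclideanSpace.single_apply, mul_ite, ite_mul, mul_comm, mul_assoc]

lemma unit_case {a b c : ℕ}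
    (α : EuclideanSpace ℂ (Fin a) →ₗᵢ[ℂ] EuclideanSpace ℂ (Fin b × Fin c))
    {C : ℝ} (hC : 0 < C)
    (hα : ∀ (ξ : EuclideanSpace ℂ (Fin a)) (η : EuclideanSpace ℂ (Fin b))
      (ζ : EuclideanSpace ℂ (Fin c)), ‖ξ‖ = 1 → ‖η‖ = 1 → ‖ζ‖ = 1 →
        ‖⟪α ξ, tensor η ζ⟫_ℂ‖ ≤ C)
    (ξ : EuclideanSpace ℂ (Fin a)) (ζ : EuclideanSpace ℂ (Fin c))
    (hξ : ‖ξ‖ = 1) (hζ : ‖ζ‖ = 1) :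
    ∑ i, ‖⟪α ξ, tensor (EuclideanSpace.single i 1) ζ⟫_ℂ‖^2 ≤ C^2 := by
  set w : Fin b → ℂ := fun i => ⟪α ξ, tensor (EuclideanSpace.single i 1) ζ⟫_ℂ with hw
  have hwj : ∀ i, w i = ∑ j, (starRingEnd ℂ) (α ξ (i, j)) * ζ j :=
    fun i => inner_tensor_single α ξ ζ i
  set s : ℝ := ∑ i, ‖w i‖^2 with hs
  have hs0 : (0:ℝ) ≤ s := Finset.sum_nonneg fun i _ => sq_nonneg _
  rcases hs0.eq_or_lt with h0 | hpos
  · rw [← h0]; positivity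
  · set η : EuclideanSpace ℂ (Fin b) :=
      WithLp.toLp 2 (fun i => ((Real.sqrt s : ℝ) : ℂ)⁻¹ * (starRingEnd ℂ) (w i)) with hη
    have hsq : (0:ℝ) < Real.sqrt s := Real.sqrt_pos.mpr hpos
    have hηn : ‖η‖ = 1 := by
      have h1 : ∑ i, ‖η i‖^2 = 1 := by
        have h2 : ∀ i : Fin b, ‖η i‖^2 = s⁻¹ * ‖w i‖^2 := by
          intro i
          have : ‖η i‖ = (Real.sqrt s)⁻¹ * ‖w i‖ := by
            simp [hη, norm_mul, abs_of_nonneg hsq.le]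
          rw [this, mul_pow, inv_pow, Real.sq_sqrt hs0]
        rw [Finset.sum_congr rfl fun i _ => h2 i, ← Finset.mul_sum, ← hs,
          inv_mul_cancel₀ hpos.ne']
      rw [EuclideanSpace.norm_eq, h1, Real.sqrt_one]
    have hinner : ⟪α ξ, tensor η ζ⟫_ℂ = ((Real.sqrt s : ℝ) : ℂ) := by
      rw [PiLp.inner_apply, Fintype.sum_prod_type]
      have key : ∀ i : Fin b, (∑ j, (starRingEnd ℂ) (α ξ (i,j)) * (tensor η ζ (i,j)))
          = ((Real.sqrt s : ℝ) : ℂ)⁻¹ * ((starRingEnd ℂ) (w i) * w i) := by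
        intro i
        calc (∑ j, (starRingEnd ℂ) (α ξ (i,j)) * (tensor η ζ (i,j)))
            = ∑ j, ((Real.sqrt s : ℝ) : ℂ)⁻¹ * ((starRingEnd ℂ) (w i) *
                ((starRingEnd ℂ) (α ξ (i,j)) * ζ j)) := by
              refine Finset.sum_congr rfl fun j _ => ?_
              show (starRingEnd ℂ) (α ξ (i,j)) * (η i * ζ j) = _
              rw [hη]; ring
          _ = ((Real.sqrt s : ℝ) : ℂ)⁻¹ * ((starRingEnd ℂ) (w i) *
                (∑ j, (starRingEnd ℂ) (α ξ (i,j)) * ζ j)) := by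
              rw [Finset.mul_sum, Finset.mul_sum]
          _ = _ := by rw [← hwj i]
      rw [show (∑ x, ∑ y, ⟪(α ξ).ofLp (x, y), (tensor η ζ).ofLp (x, y)⟫_ℂ)
          = ∑ i, ∑ j, (starRingEnd ℂ) (α ξ (i,j)) * (tensor η ζ (i,j)) from
        Finset.sum_congr rfl fun i _ => Finset.sum_congr rfl fun j _ => by
          rw [RCLike.inner_apply, mul_comm]]
      calc (∑ i, ∑ j, (starRingEnd ℂ) (α ξ (i,j)) * (tensor η ζ (i,j)))
          = ∑ i, ((Real.sqrt s : ℝ) : ℂ)⁻¹ * ((starRingEnd ℂ) (w i) * w i) :=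
            Finset.sum_congr rfl fun i _ => key i
        _ = ((Real.sqrt s : ℝ) : ℂ)⁻¹ * ∑ i, (((‖w i‖^2 : ℝ)) : ℂ) := by
            rw [Finset.mul_sum]
            exact Finset.sum_congr rfl fun i _ => by rw [Complex.conj_mul']; norm_cast
        _ = ((Real.sqrt s : ℝ) : ℂ)⁻¹ * ((s : ℝ) : ℂ) := by
            congr 1; rw [hs]; push_cast; ring
        _ = ((Real.sqrt s : ℝ) : ℂ) := by
            rw [show ((s : ℝ) : ℂ) = ((Real.sqrt s * Real.sqrt s : ℝ) : ℂ) by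
              rw [Real.mul_self_sqrt hs0]]
            push_cast
            field_simp
    have hb := hα ξ η ζ hξ hηn hζ
    rw [hinner, Complex.norm_real, Real.norm_eq_abs, abs_of_nonneg hsq.le] at hb
    calc s = Real.sqrt s ^ 2 := (Real.sq_sqrt hs0).symm
      _ ≤ C^2 := pow_le_pow_left₀ hsq.le hb 2

lemma tensor_smul_right {a b : ℕ} (η : EuclideanSpace ℂ (Fin a))
    (ζ : EuclideanSpace ℂ (Fin b)) (s : ℂ) :
    tensor η (s • ζ) = s • tensor η ζ := by
  ext p
  show η p.1 * (s • ζ) p.2 = (s • tensor η ζ) p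
  simp [tensor, PiLp.smul_apply, smul_eq_mul]
  ring

lemma scaled_case {a b c : ℕ}
    (α : EuclideanSpace ℂ (Fin a) →ₗᵢ[ℂ] EuclideanSpace ℂ (Fin b × Fin c))
    {C : ℝ} (hC : 0 < C)
    (hα : ∀ (ξ : EuclideanSpace ℂ (Fin a)) (η : EuclideanSpace ℂ (Fin b))
      (ζ : EuclideanSpace ℂ (Fin c)), ‖ξ‖ = 1 → ‖η‖ = 1 → ‖ζ‖ = 1 →
        ‖⟪α ξ, tensor η ζ⟫_ℂ‖ ≤ C)
    (ξ : EuclideanSpace ℂ (Fin a)) (ζ : EuclideanSpace ℂ (Fin c)) :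
    ∑ i, ‖⟪α ξ, tensor (EuclideanSpace.single i 1) ζ⟫_ℂ‖^2
      ≤ C^2 * (‖ξ‖^2 * ‖ζ‖^2) := by
  rcases eq_or_ne ξ 0 with rfl | hξ0
  · simp [map_zero]
  rcases eq_or_ne ζ 0 with rfl | hζ0
  · have : ∀ i : Fin b, tensor (EuclideanSpace.single i (1:ℂ)) (0 : EuclideanSpace ℂ (Fin c))
        = 0 := by
      intro i
      ext p
      show EuclideanSpace.single i (1:ℂ) p.1 * (0 : EuclideanSpace ℂ (Fin c)) p.2 = _
      simp
    simp [this]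
  have hrξ : (0:ℝ) < ‖ξ‖ := norm_pos_iff.mpr hξ0
  have hrζ : (0:ℝ) < ‖ζ‖ := norm_pos_iff.mpr hζ0
  set u : EuclideanSpace ℂ (Fin a) := ((‖ξ‖ : ℂ))⁻¹ • ξ with hu
  set v : EuclideanSpace ℂ (Fin c) := ((‖ζ‖ : ℂ))⁻¹ • ζ with hv
  have hun : ‖u‖ = 1 := by
    rw [hu, norm_smul]
    simp [hrξ.ne']
  have hvn : ‖v‖ = 1 := by
    rw [hv, norm_smul]
    simp [hrζ.ne']
  have hξu : ξ = (‖ξ‖ : ℂ) • u := by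
    rw [hu, smul_smul]
    rw [mul_inv_cancel₀ (by exact_mod_cast hrξ.ne')]
    simp
  have hζv : ζ = (‖ζ‖ : ℂ) • v := by
    rw [hv, smul_smul]
    rw [mul_inv_cancel₀ (by exact_mod_cast hrζ.ne')]
    simp
  have hnorm : ∀ i, ‖⟪α ξ, tensor (EuclideanSpace.single i 1) ζ⟫_ℂ‖^2
      = (‖ξ‖^2 * ‖ζ‖^2) * ‖⟪α u, tensor (EuclideanSpace.single i 1) v⟫_ℂ‖^2 := by
    intro i
    conv_lhs => rw [hξu, hζv]
    rw [tensor_smul_right, α.map_smul, inner_smul_left, inner_smul_right]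
    rw [norm_mul, norm_mul]
    simp only [RingHom.id_apply, RCLike.star_def, RCLike.norm_conj, Complex.norm_real,
      Real.norm_eq_abs, abs_of_nonneg hrξ.le, abs_of_nonneg hrζ.le]
    ring
  calc ∑ i, ‖⟪α ξ, tensor (EuclideanSpace.single i 1) ζ⟫_ℂ‖^2
      = (‖ξ‖^2 * ‖ζ‖^2) * ∑ i, ‖⟪α u, tensor (EuclideanSpace.single i 1) v⟫_ℂ‖^2 := by
        rw [Finset.mul_sum]; exact Finset.sum_congr rfl fun i _ => hnorm i
    _ ≤ (‖ξ‖^2 * ‖ζ‖^2) * C^2 := by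
        refine mul_le_mul_of_nonneg_left (unit_case α hC hα u v hun hvn) (by positivity)
    _ = C^2 * (‖ξ‖^2 * ‖ζ‖^2) := by ring

lemma stepA {a b c : ℕ}
    (α : EuclideanSpace ℂ (Fin a) →ₗᵢ[ℂ] EuclideanSpace ℂ (Fin b × Fin c))
    (ρ : Matrix (Fin a) (Fin a) ℂ) (ζ : Fin c → ℂ) :
    star ζ ⬝ᵥ (chan α ρ *ᵥ ζ)
      = ∑ i : Fin b, star (fun p : Fin b × Fin c => if p.1 = i then ζ p.2 else 0)
          ⬝ᵥ ((isomMat α * ρ * (isomMat α).conjTranspose)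
            *ᵥ (fun p : Fin b × Fin c => if p.1 = i then ζ p.2 else 0)) := by
  simp only [dotProduct, Matrix.mulVec, chan, Matrix.of_apply, Fintype.sum_prod_type,
    Pi.star_apply, apply_ite (star : ℂ → ℂ), star_zero, ite_mul, zero_mul, mul_ite, mul_zero,
    Finset.sum_ite_irrel, Finset.sum_const_zero, Finset.sum_ite_eq, Finset.sum_ite_eq', Finset.mem_univ, if_true,
    Finset.mul_sum, Finset.sum_mul]
  rw [show (∑ x : Fin c, ∑ x_1 : Fin c, ∑ i : Fin b,
      star (ζ x) * ((isomMat α * ρ * (isomMat α)ᴴ) (i, x) (i, x_1) * ζ x_1))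
      = ∑ x : Fin c, ∑ i : Fin b, ∑ x_1 : Fin c,
      star (ζ x) * ((isomMat α * ρ * (isomMat α)ᴴ) (i, x) (i, x_1) * ζ x_1) from
    Finset.sum_congr rfl fun x _ => Finset.sum_comm]
  exact Finset.sum_comm

lemma conj_quad {m n : Type*} [Fintype m] [Fintype n]
    (M : Matrix m n ℂ) (v : n → ℂ) :
    star v ⬝ᵥ ((Mᴴ * M) *ᵥ v) = star (M *ᵥ v) ⬝ᵥ (M *ᵥ v) := by
  rw [← Matrix.mulVec_mulVec, Matrix.star_mulVec, ← dotProduct_mulVec]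

lemma quad_eq {a b c : ℕ}
    (α : EuclideanSpace ℂ (Fin a) →ₗᵢ[ℂ] EuclideanSpace ℂ (Fin b × Fin c))
    {ρ : Matrix (Fin a) (Fin a) ℂ} (hρ : ρ.PosSemidef) (ζ : EuclideanSpace ℂ (Fin c)) :
    star (ζ : Fin c → ℂ) ⬝ᵥ (chan α ρ *ᵥ (ζ : Fin c → ℂ))
      = ∑ k : Fin a, ∑ i : Fin b,
        ((‖⟪α (WithLp.toLp 2 (fun s => star (hρ.sqrt k s)) : EuclideanSpace ℂ (Fin a)),
            tensor (EuclideanSpace.single i 1) ζ⟫_ℂ‖^2 : ℝ) : ℂ) := by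
  set A := isomMat α with hA
  set B := hρ.sqrt with hB
  have hBH : Bᴴ = B := hρ.posSemidef_sqrt.1
  have hfact : A * ρ * Aᴴ = (B * Aᴴ)ᴴ * (B * Aᴴ) := by
    rw [Matrix.conjTranspose_mul, Matrix.conjTranspose_conjTranspose, hBH,
      ← hρ.sqrt_mul_self]
    simp only [← hB, Matrix.mul_assoc]
  rw [stepA]
  have step2 : ∀ i : Fin b,
      star (fun p : Fin b × Fin c => if p.1 = i then ζ p.2 else 0)
          ⬝ᵥ ((A * ρ * Aᴴ) *ᵥ (fun p : Fin b × Fin c => if p.1 = i then ζ p.2 else 0))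
        = ∑ k : Fin a, ((‖⟪α (WithLp.toLp 2 (fun s => star (B k s)) : EuclideanSpace ℂ (Fin a)),
            tensor (EuclideanSpace.single i 1) ζ⟫_ℂ‖^2 : ℝ) : ℂ) := by
    intro i
    set u : Fin b × Fin c → ℂ := fun p => if p.1 = i then ζ p.2 else 0 with hu
    have hyk : ∀ k : Fin a, ((B * Aᴴ) *ᵥ u) k
        = ⟪α (WithLp.toLp 2 (fun s => star (B k s)) : EuclideanSpace ℂ (Fin a)),
            tensor (EuclideanSpace.single i 1) ζ⟫_ℂ := by
      intro k
      rw [inner_tensor_single]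
      have : ∀ j : Fin c, (starRingEnd ℂ)
          ((α (WithLp.toLp 2 (fun s => star (B k s)) : EuclideanSpace ℂ (Fin a))) (i, j))
          = ∑ s : Fin a, star (A (i,j) s) * B k s := by
        intro j
        rw [← mulVec_isomMat α _ (i,j)]
        simp only [Matrix.mulVec, dotProduct, map_sum, _root_.map_mul, ← hA]
        refine Finset.sum_congr rfl fun s _ => ?_
        simp [mul_comm]
      rw [Finset.sum_congr rfl fun j _ => by rw [this j]]
      rw [← Matrix.mulVec_mulVec]
      simp only [Matrix.mulVec, dotProduct, Matrix.conjTranspose_apply, hu]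
      simp only [Fintype.sum_prod_type, mul_ite, mul_zero, Finset.sum_ite_irrel,
        Finset.sum_const_zero, Finset.sum_ite_eq, Finset.sum_ite_eq', Finset.mem_univ, if_true,
        Finset.mul_sum, Finset.sum_mul]
      rw [Finset.sum_comm]
      refine Finset.sum_congr rfl fun j _ => Finset.sum_congr rfl fun s _ => by ring
    rw [hfact, conj_quad]
    simp only [Matrix.mulVec_mulVec] at hyk ⊢
    simp only [dotProduct, Pi.star_apply]
    refine Finset.sum_congr rfl fun k _ => ?_
    rw [hyk k, RCLike.star_def, Complex.conj_mul']
    norm_cast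
  rw [Finset.sum_congr rfl fun i _ => step2 i, Finset.sum_comm]

lemma conjTranspose_isomMat_mul {a b c : ℕ}
    (α : EuclideanSpace ℂ (Fin a) →ₗᵢ[ℂ] EuclideanSpace ℂ (Fin b × Fin c)) :
    (isomMat α)ᴴ * isomMat α = 1 := by
  ext s t
  simp only [Matrix.mul_apply, Matrix.conjTranspose_apply, isomMat, Matrix.of_apply]
  have h := α.inner_map_map (EuclideanSpace.single s (1:ℂ)) (EuclideanSpace.single t 1)
  rw [PiLp.inner_apply] at h
  simp only [RCLike.inner_apply] at h
  simp only [RCLike.star_def]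
  rw [Finset.sum_congr rfl fun x _ => mul_comm _ _, h, EuclideanSpace.inner_single_left, EuclideanSpace.single_apply, Matrix.one_apply]
  simp [eq_comm]

lemma trace_chan {a b c : ℕ}
    (α : EuclideanSpace ℂ (Fin a) →ₗᵢ[ℂ] EuclideanSpace ℂ (Fin b × Fin c))
    (ρ : Matrix (Fin a) (Fin a) ℂ) : (chan α ρ).trace = ρ.trace := by
  have hAA : (isomMat α)ᴴ * isomMat α = 1 := conjTranspose_isomMat_mul α
  have h1 : (chan α ρ).trace
      = (isomMat α * ρ * (isomMat α)ᴴ).trace := by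
    rw [Matrix.trace, Matrix.trace]
    simp only [Matrix.diag_apply, chan, Matrix.of_apply]
    rw [Fintype.sum_prod_type]
    exact Finset.sum_comm
  rw [h1, Matrix.trace_mul_cycle, hAA, Matrix.one_mul]

lemma chan_isHermitian {a b c : ℕ}
    (α : EuclideanSpace ℂ (Fin a) →ₗᵢ[ℂ] EuclideanSpace ℂ (Fin b × Fin c))
    {ρ : Matrix (Fin a) (Fin a) ℂ} (hρ : ρ.PosSemidef) :
    (chan α ρ).IsHermitian := by
  have hN : (isomMat α * ρ * (isomMat α)ᴴ).IsHermitian :=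
    (hρ.mul_mul_conjTranspose_same (isomMat α)).1
  ext j j'
  simp only [Matrix.conjTranspose_apply, chan, Matrix.of_apply, star_sum]
  refine Finset.sum_congr rfl fun i _ => ?_
  rw [← Matrix.conjTranspose_apply, hN.eq]

private lemma dot_MM {c : ℕ} (M N : Matrix (Fin c) (Fin c) ℂ)
    (hMH : Mᴴ = M) (hNH : Nᴴ = N) (hMN : M = N * N) (v : Fin c → ℂ) :
    star (M *ᵥ v) ⬝ᵥ (M *ᵥ v) = star (N *ᵥ v) ⬝ᵥ (M *ᵥ (N *ᵥ v)) := by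
  rw [← conj_quad M v, hMH]
  have hMM : M * M = N * (M * N) := by
    rw [hMN]; simp only [Matrix.mul_assoc]
  rw [hMM, ← Matrix.mulVec_mulVec, dotProduct_mulVec (star v) N,
    show star v ᵥ* N = star (N *ᵥ v) from by rw [Matrix.star_mulVec, hNH],
    ← Matrix.mulVec_mulVec]

private lemma dot_sq {c : ℕ} (M N : Matrix (Fin c) (Fin c) ℂ)
    (hNH : Nᴴ = N) (hMN : M = N * N) (v : Fin c → ℂ) :
    star (N *ᵥ v) ⬝ᵥ (N *ᵥ v) = star v ⬝ᵥ (M *ᵥ v) := by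
  rw [← conj_quad N v, hNH, ← hMN]

theorem channel_norm_and_MOE_bounds (a b c : ℕ)
    (α : EuclideanSpace ℂ (Fin a) →ₗᵢ[ℂ] EuclideanSpace ℂ (Fin b × Fin c))
    (C : ℝ) (hC : 0 < C)
    (hα : ∀ (ξ : EuclideanSpace ℂ (Fin a)) (η : EuclideanSpace ℂ (Fin b))
      (ζ : EuclideanSpace ℂ (Fin c)), ‖ξ‖ = 1 → ‖η‖ = 1 → ‖ζ‖ = 1 →
        ‖⟪α ξ, tensor η ζ⟫_ℂ‖ ≤ C) :
    ∀ (ρ : Matrix (Fin a) (Fin a) ℂ), ρ.PosSemidef → ρ.trace = 1 →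
      ‖Matrix.toEuclideanCLM (𝕜 := ℂ) (chan α ρ)‖ ≤ C ^ 2 ∧
      ∀ (h : (chan α ρ).IsHermitian),
        -(2 * Real.log C) ≤ -∑ i, h.eigenvalues i * Real.log (h.eigenvalues i) := by
  intro ρ hρ htr
  set M := chan α ρ with hM
  have hBH : hρ.sqrtᴴ = hρ.sqrt := hρ.posSemidef_sqrt.1
  set x : Fin a → EuclideanSpace ℂ (Fin a) :=
    fun k => WithLp.toLp 2 (fun s => star (hρ.sqrt k s)) with hx
  have hxsum : ∑ k, ‖x k‖^2 = 1 := by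
    have h1 : ∀ k, ‖x k‖^2 = ∑ s, ‖hρ.sqrt k s‖^2 := by
      intro k
      rw [EuclideanSpace.norm_eq, Real.sq_sqrt (Finset.sum_nonneg fun s _ => sq_nonneg _)]
      exact Finset.sum_congr rfl fun s _ => by rw [hx]; simp [norm_star]
    have h2 : ((∑ k, ∑ s, ‖hρ.sqrt k s‖^2 : ℝ) : ℂ) = ρ.trace := by
      have h2a : (hρ.sqrtᴴ * hρ.sqrt).trace = ρ.trace := by rw [hBH, hρ.sqrt_mul_self]
      rw [← h2a, Matrix.trace]
      push_cast
      refine (Finset.sum_comm).trans (Finset.sum_congr rfl fun s _ => ?_)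
      simp only [Matrix.diag_apply, Matrix.mul_apply, Matrix.conjTranspose_apply]
      refine Finset.sum_congr rfl fun k _ => ?_
      rw [RCLike.star_def, Complex.conj_mul']
    rw [htr] at h2
    rw [Finset.sum_congr rfl fun k (_ : k ∈ Finset.univ) => h1 k]
    exact_mod_cast h2
  set q : EuclideanSpace ℂ (Fin c) → ℝ := fun ζ => ∑ k : Fin a, ∑ i : Fin b,
      ‖⟪α (x k), tensor (EuclideanSpace.single i 1) ζ⟫_ℂ‖^2 with hq
  have hquad : ∀ ζ : EuclideanSpace ℂ (Fin c),
      star (ζ : Fin c → ℂ) ⬝ᵥ (M *ᵥ (ζ : Fin c → ℂ)) = ((q ζ : ℝ) : ℂ) := by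
    intro ζ
    simp only [hq, Complex.ofReal_sum]
    exact quad_eq α hρ ζ
  have hqle : ∀ ζ : EuclideanSpace ℂ (Fin c), q ζ ≤ C^2 * ‖ζ‖^2 := by
    intro ζ
    calc q ζ ≤ ∑ k, C^2 * (‖x k‖^2 * ‖ζ‖^2) :=
          Finset.sum_le_sum fun k _ => scaled_case α hC hα (x k) ζ
      _ = C^2 * ‖ζ‖^2 * ∑ k, ‖x k‖^2 := by
          rw [Finset.mul_sum]; exact Finset.sum_congr rfl fun k _ => by ring
      _ = C^2 * ‖ζ‖^2 := by rw [hxsum, mul_one]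
  have hq0 : ∀ ζ : EuclideanSpace ℂ (Fin c), 0 ≤ q ζ :=
    fun ζ => Finset.sum_nonneg fun k _ => Finset.sum_nonneg fun i _ => sq_nonneg _
  have hMH : M.IsHermitian := chan_isHermitian α hρ
  have hPSD : M.PosSemidef := by
    refine Matrix.PosSemidef.of_dotProduct_mulVec_nonneg hMH fun v => ?_
    rw [show star v ⬝ᵥ (M *ᵥ v)
        = ((q (WithLp.toLp 2 v : EuclideanSpace ℂ (Fin c)) : ℝ) : ℂ) from hquad (WithLp.toLp 2 v)]
    exact_mod_cast hq0 _
  have hnormsq : ∀ (v : EuclideanSpace ℂ (Fin c)),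
      star (v : Fin c → ℂ) ⬝ᵥ (v : Fin c → ℂ) = ((‖v‖^2 : ℝ) : ℂ) := by
    intro v
    rw [show star (v : Fin c → ℂ) ⬝ᵥ (v : Fin c → ℂ) = ⟪v, v⟫_ℂ from by rw [EuclideanSpace.inner_eq_star_dotProduct, dotProduct_comm],
      inner_self_eq_norm_sq_to_K]
    norm_cast
  refine ⟨?_, ?_⟩
  · refine ContinuousLinearMap.opNorm_le_bound _ (by positivity) fun ζ => ?_
    set N := hPSD.sqrt with hN
    have hNH : Nᴴ = N := hPSD.posSemidef_sqrt.1
    set y : EuclideanSpace ℂ (Fin c) :=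
      (WithLp.equiv 2 _).symm (N *ᵥ (WithLp.equiv 2 _ ζ)) with hy
    set z : EuclideanSpace ℂ (Fin c) :=
      (WithLp.equiv 2 _).symm (M *ᵥ (WithLp.equiv 2 _ ζ)) with hz
    have E : ((‖Matrix.toEuclideanCLM (𝕜 := ℂ) M ζ‖^2 : ℝ) : ℂ) = ((q y : ℝ) : ℂ) :=
      ((hnormsq z).symm.trans
        (dot_MM M N hMH hNH (hPSD.sqrt_mul_self).symm (WithLp.equiv 2 _ ζ))).trans (hquad y)
    have E2 : (‖Matrix.toEuclideanCLM (𝕜 := ℂ) M ζ‖^2 : ℝ) = q y := by exact_mod_cast E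
    have E5 : ((‖y‖^2 : ℝ) : ℂ) = ((q ζ : ℝ) : ℂ) :=
      ((hnormsq y).symm.trans
        (dot_sq M N hNH (hPSD.sqrt_mul_self).symm (WithLp.equiv 2 _ ζ))).trans (hquad ζ)
    have E6 : (‖y‖^2 : ℝ) = q ζ := by exact_mod_cast E5
    have key : (‖Matrix.toEuclideanCLM (𝕜 := ℂ) M ζ‖^2 : ℝ) ≤ (C^2 * ‖ζ‖)^2 := by
      calc (‖Matrix.toEuclideanCLM (𝕜 := ℂ) M ζ‖^2 : ℝ) = q y := E2
        _ ≤ C^2 * ‖y‖^2 := hqle y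
        _ = C^2 * q ζ := by rw [E6]
        _ ≤ C^2 * (C^2 * ‖ζ‖^2) := mul_le_mul_of_nonneg_left (hqle ζ) (by positivity)
        _ = (C^2 * ‖ζ‖)^2 := by ring
    have h0 : (0:ℝ) ≤ C^2 * ‖ζ‖ := by positivity
    nlinarith [norm_nonneg (Matrix.toEuclideanCLM (𝕜 := ℂ) M ζ), key, h0]
  · intro h
    have hev0 : ∀ i, 0 ≤ h.eigenvalues i := fun i => hPSD.eigenvalues_nonneg i
    have hevle : ∀ i, h.eigenvalues i ≤ C^2 := by
      intro i
      rw [h.eigenvalues_eq i]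
      rw [show (star ⇑(h.eigenvectorBasis i) ⬝ᵥ (M *ᵥ ⇑(h.eigenvectorBasis i)))
          = ((q (h.eigenvectorBasis i) : ℝ) : ℂ) from hquad (h.eigenvectorBasis i)]
      have hv1 : ‖h.eigenvectorBasis i‖ = 1 := h.eigenvectorBasis.orthonormal.1 i
      calc RCLike.re (((q (h.eigenvectorBasis i) : ℝ) : ℂ)) = q (h.eigenvectorBasis i) := by
            simp
        _ ≤ C^2 * ‖h.eigenvectorBasis i‖^2 := hqle _
        _ = C^2 := by rw [hv1]; ring
    have hsum : ∑ i, h.eigenvalues i = 1 := by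
      have h1 : M.trace = ∑ i, (h.eigenvalues i : ℂ) := by
        exact h.trace_eq_sum_eigenvalues
      have h2 : M.trace = 1 := by rw [hM, trace_chan α ρ, htr]
      rw [h2] at h1
      have : ((∑ i, h.eigenvalues i : ℝ) : ℂ) = 1 := by push_cast; rw [← h1]
      exact_mod_cast this
    have hlog : ∑ i, h.eigenvalues i * Real.log (h.eigenvalues i) ≤ 2 * Real.log C := by
      calc ∑ i, h.eigenvalues i * Real.log (h.eigenvalues i)
          ≤ ∑ i, h.eigenvalues i * (2 * Real.log C) := by
            refine Finset.sum_le_sum fun i _ => ?_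
            rcases (hev0 i).eq_or_lt with h0 | hpos
            · rw [← h0]; simp
            · refine mul_le_mul_of_nonneg_left ?_ (hev0 i)
              calc Real.log (h.eigenvalues i) ≤ Real.log (C^2) :=
                    Real.log_le_log hpos (hevle i)
                _ = 2 * Real.log C := by
                    rw [Real.log_pow]; push_cast; ring
        _ = 2 * Real.log C := by rw [← Finset.sum_mul, hsum, one_mul]
    linarith
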